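/- For all integers n and k with 1 ≤ k < n, the equation σ_k(x_1,…,x_n) = σ_n(x_1,…,x_n) has at least one solution in positive integers x_1 ≤ x_2 ≤ … ≤ x_n, and the number of such solutions is strictly less than 2^(n·2^C(n,k)), where C(n,k) is the binomial coefficient. In particular, 1 ≤ f_k(n) < 2^(n·2^C(n,k)). -/

import Mathlib

open Polynomial Finset

/-- The `k`-th elementary symmetric polynomial of `x 0, …, x (n-1)`. -/
def esymm (n k : ℕ) (x : Fin n → ℕ) : ℕ :=
  ∑ s ∈ Finset.univ.powersetCard k, ∏ i ∈ s, x i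

/-- The set of nondecreasing `n`-tuples of positive integers with
`σ_k(x_1,…,x_n) = σ_n(x_1,…,x_n)`. -/
def sols (n k : ℕ) : Set (Fin n → ℕ) :=
  {x | (∀ i, 0 < x i) ∧ Monotone x ∧ esymm n k x = esymm n n x}

lemma esymm_eq_coeff (n j : ℕ) (x : Fin n → ℕ) :
    esymm n j x = (∏ i : Fin n, (C (x i) * X + 1 : ℕ[X])).coeff j := by
  rw [Finset.prod_add, Polynomial.finset_sum_coeff]
  have h1 : ∀ t ∈ (univ : Finset (Fin n)).powerset,
      ((∏ i ∈ t, (C (x i) * X)) * ∏ _i ∈ univ \ t, (1:ℕ[X])).coeff j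
        = if t.card = j then ∏ i ∈ t, x i else 0 := by
    intro t _
    rw [Finset.prod_const_one, mul_one, Finset.prod_mul_distrib, Finset.prod_const,
      ← map_prod (C : ℕ →+* ℕ[X]), Polynomial.coeff_C_mul, Polynomial.coeff_X_pow]
    by_cases h : j = t.card <;> simp [h, eq_comm]
  rw [Finset.sum_congr rfl h1, Finset.sum_ite, Finset.sum_const_zero, add_zero]
  · unfold esymm
    rw [Finset.powersetCard_eq_filter]

lemma esymm_self (n : ℕ) (x : Fin n → ℕ) : esymm n n x = ∏ i, x i := by
  unfold esymm
  have h : Finset.univ.powersetCard n = ({univ} : Finset (Finset (Fin n))) := by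
    ext s
    simp only [Finset.mem_powersetCard, Finset.mem_singleton]
    constructor
    · rintro ⟨-, hc⟩
      exact Finset.eq_univ_of_card s (by simp [hc])
    · rintro rfl
      exact ⟨subset_rfl, by simp⟩
  rw [h, Finset.sum_singleton]

/-! ### Existence construction -/

noncomputable def phiL (a : ℕ) (l : List ℕ) : ℕ[X] :=
  (X + 1) ^ a * (l.map (fun v => C v * X + 1)).prod

noncomputable def LL (a : ℕ) : ℕ → List ℕ
  | 0 => []
  | j + 1 => LL a j ++ [1 + (phiL a (LL a j)).coeff j]

lemma LL_length (a j : ℕ) : (LL a j).length = j := by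
  induction j with
  | zero => rfl
  | succ j ih => simp [LL, ih]

lemma phiL_append (a : ℕ) (l : List ℕ) (v : ℕ) :
    phiL a (l ++ [v]) = phiL a l * (C v * X + 1) := by
  simp [phiL, mul_assoc]

lemma coeff_mul_linear (P : ℕ[X]) (v j : ℕ) :
    (P * (C v * X + 1)).coeff (j + 1) = P.coeff (j + 1) + v * P.coeff j := by
  rw [mul_add, mul_one, Polynomial.coeff_add, show P * (C v * X) = (C v * P) * X by ring,
    Polynomial.coeff_mul_X, Polynomial.coeff_C_mul, add_comm]

lemma coeff0_mul_linear (P : ℕ[X]) (v : ℕ) :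
    (P * (C v * X + 1)).coeff 0 = P.coeff 0 := by
  rw [Polynomial.mul_coeff_zero]
  simp

lemma coeff0_phiL (a : ℕ) (l : List ℕ) : (phiL a l).coeff 0 = 1 := by
  induction l with
  | nil => simp [phiL, Polynomial.coeff_zero_eq_eval_zero]
  | cons v l ih =>
      have : phiL a (v :: l) = phiL a l * (C v * X + 1) := by
        simp [phiL]; ring
      rw [this, coeff0_mul_linear, ih]

lemma coeff_phiL_pos (a : ℕ) (l : List ℕ) (hl : ∀ v ∈ l, 1 ≤ v) :
    ∀ t, t ≤ a + l.length → 1 ≤ (phiL a l).coeff t := by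
  induction l with
  | nil =>
      intro t ht
      simp only [phiL, List.map_nil, List.prod_nil, mul_one, Polynomial.coeff_X_add_one_pow,
        Nat.cast_id]
      exact Nat.choose_pos (by simpa using ht)
  | cons v l ih =>
      intro t ht
      have hstep : phiL a (v :: l) = phiL a l * (C v * X + 1) := by
        simp [phiL]; ring
      have hl' : ∀ w ∈ l, 1 ≤ w := fun w hw => hl w (List.mem_cons_of_mem _ hw)
      match t with
      | 0 => rw [hstep, coeff0_mul_linear, coeff0_phiL]
      | t + 1 =>
          rw [hstep, coeff_mul_linear]
          have h1 : 1 ≤ v * (phiL a l).coeff t := by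
            have := ih hl' t (by simp at ht ⊢; omega)
            have hv := hl v (List.mem_cons_self)
            exact Nat.one_le_iff_ne_zero.mpr (by positivity)
          omega

lemma LL_mem_one_le (a j : ℕ) : ∀ v ∈ LL a j, 1 ≤ v := by
  induction j with
  | zero => simp [LL]
  | succ j ih =>
      intro v hv
      simp only [LL, List.mem_append, List.mem_singleton] at hv
      rcases hv with h | h
      · exact ih v h
      · omega

/-- the element appended at step `j+1` -/
noncomputable def zc (a j : ℕ) : ℕ := 1 + (phiL a (LL a j)).coeff j

lemma LL_succ (a j : ℕ) : LL a (j + 1) = LL a j ++ [zc a j] := rfl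

lemma phiL_LL_succ (a j : ℕ) :
    phiL a (LL a (j + 1)) = phiL a (LL a j) * (C (zc a j) * X + 1) := by
  rw [LL_succ, phiL_append]

lemma coeff_phiL_LL_pos (a j t : ℕ) (ht : t ≤ a + j) : 1 ≤ (phiL a (LL a j)).coeff t :=
  coeff_phiL_pos a _ (LL_mem_one_le a j) t (by rw [LL_length]; exact ht)

lemma zc_le_zc_succ (a j : ℕ) : zc a j ≤ zc a (j + 1) := by
  unfold zc
  rw [phiL_LL_succ, coeff_mul_linear]
  have h := coeff_phiL_LL_pos a j j (by omega)
  have : zc a j * (phiL a (LL a j)).coeff j ≥ zc a j := by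
    calc zc a j = zc a j * 1 := by ring
    _ ≤ zc a j * (phiL a (LL a j)).coeff j := Nat.mul_le_mul_left _ h
  unfold zc at this ⊢
  omega

/-- key invariant: the product of the list is `1 +` the `j`-th coefficient. -/
lemma prod_LL (a j : ℕ) :
    (LL a (j + 1)).prod = 1 + (phiL a (LL a (j + 1))).coeff j := by
  induction j with
  | zero =>
      have h0 : zc a 0 = 2 := by
        unfold zc
        simp [LL, phiL, Polynomial.coeff_zero_eq_eval_zero]
      rw [LL_succ]
      simp only [LL, List.nil_append, List.prod_cons, List.prod_nil, mul_one]
      rw [coeff0_phiL, h0]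
  | succ j ih =>
      rw [LL_succ a (j+1), List.prod_append, List.prod_singleton, ih]
      rw [show LL a (j+1) ++ [zc a (j+1)] = LL a (j+2) from rfl]
      rw [phiL_LL_succ a (j+1), coeff_mul_linear]
      have hz : zc a (j + 1) = 1 + (phiL a (LL a (j+1))).coeff (j+1) := rfl
      set c1 := (phiL a (LL a (j+1))).coeff j
      set c2 := (phiL a (LL a (j+1))).coeff (j+1)
      rw [hz]
      ring

lemma LL_mem_le_zc (a j : ℕ) : ∀ v ∈ LL a j, v ≤ zc a j := by
  induction j with
  | zero => simp [LL]
  | succ j ih =>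
      intro v hv
      rw [LL_succ] at hv
      simp only [List.mem_append, List.mem_singleton] at hv
      rcases hv with h | rfl
      · exact le_trans (ih v h) (zc_le_zc_succ a j)
      · exact zc_le_zc_succ a j

lemma LL_sorted (a j : ℕ) : List.Pairwise (· ≤ ·) (LL a j) := by
  induction j with
  | zero => simp [LL]
  | succ j ih =>
      rw [LL_succ, List.pairwise_append]
      exact ⟨ih, List.pairwise_singleton _ _, fun v hv w hw => by
        simp only [List.mem_singleton] at hw; subst hw; exact LL_mem_le_zc a j v hv⟩

noncomputable def zl (a k : ℕ) : ℕ := (phiL a (LL a k)).coeff k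

lemma one_le_zl (a k : ℕ) : 1 ≤ zl a k :=
  coeff_phiL_LL_pos a k k (by omega)

lemma LL_mem_le_zl (a k : ℕ) (hk : 1 ≤ k) : ∀ v ∈ LL a k, v ≤ zl a k := by
  obtain ⟨j, rfl⟩ : ∃ j, k = j + 1 := ⟨k - 1, by omega⟩
  have hzc : zc a j ≤ zl a (j + 1) := by
    unfold zl
    rw [phiL_LL_succ, coeff_mul_linear]
    have h := coeff_phiL_LL_pos a j j (by omega)
    have : zc a j * 1 ≤ zc a j * (phiL a (LL a j)).coeff j := Nat.mul_le_mul_left _ h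
    omega
  intro v hv
  rw [LL_succ] at hv
  simp only [List.mem_append, List.mem_singleton] at hv
  rcases hv with h | rfl
  · exact le_trans (LL_mem_le_zc a j v h) hzc
  · exact hzc

noncomputable def bigL (a k : ℕ) : List ℕ :=
  List.replicate a 1 ++ LL a k ++ [zl a k]

lemma bigL_length (a k : ℕ) : (bigL a k).length = a + k + 1 := by
  simp [bigL, LL_length]; omega

lemma bigL_mem_one_le (a k : ℕ) : ∀ v ∈ bigL a k, 1 ≤ v := by
  intro v hv
  simp only [bigL, List.mem_append, List.mem_singleton, List.mem_replicate] at hv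
  rcases hv with (⟨-, rfl⟩ | h) | rfl
  · exact le_refl 1
  · exact LL_mem_one_le a k v h
  · exact one_le_zl a k

lemma bigL_sorted (a k : ℕ) (hk : 1 ≤ k) : List.Pairwise (· ≤ ·) (bigL a k) := by
  unfold bigL
  rw [List.pairwise_append, List.pairwise_append]
  refine ⟨⟨List.pairwise_replicate.mpr (by simp), LL_sorted a k, ?_⟩,
    List.pairwise_singleton _ _, ?_⟩
  · intro v hv w hw
    rcases List.mem_replicate.mp hv with ⟨-, rfl⟩
    exact LL_mem_one_le a k w hw
  · intro v hv w hw
    simp only [List.mem_singleton] at hw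
    subst hw
    simp only [List.mem_append, List.mem_replicate] at hv
    rcases hv with ⟨-, rfl⟩ | h
    · exact one_le_zl a k
    · exact LL_mem_le_zl a k hk v h

lemma prod_fin_list {M : Type*} [CommMonoid M] (l : List ℕ) (n : ℕ) (h : l.length = n)
    (g : ℕ → M) : ∏ i : Fin n, g (l.getD i.val 1) = (l.map g).prod := by
  subst h
  have h1 : ∀ i : Fin l.length, l.getD i.val 1 = l.get i := fun i =>
    List.getD_eq_getElem l 1 i.isLt
  rw [Finset.prod_congr rfl (fun i _ => by rw [h1 i])]
  rw [show l.map g = List.ofFn (fun i : Fin l.length => g (l.get i)) from ?_, List.prod_ofFn]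
  conv_lhs => rw [← List.ofFn_getElem (xs := l)]
  rw [List.map_ofFn]
  rfl

noncomputable def xex (n k : ℕ) : Fin n → ℕ := fun i => (bigL (n - k - 1) k).getD i.val 1

theorem xex_mem (n k : ℕ) (hk : 1 ≤ k) (hkn : k < n) : xex n k ∈ sols n k := by
  set a := n - k - 1 with ha
  have hlen : (bigL a k).length = n := by rw [bigL_length]; omega
  have hget : ∀ i : Fin n, (bigL a k).getD i.val 1 ∈ bigL a k := by
    intro i
    rw [List.getD_eq_getElem (bigL a k) 1 (by omega : i.val < (bigL a k).length)]
    exact List.getElem_mem _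
  refine ⟨fun i => ?_, ?_, ?_⟩
  · exact bigL_mem_one_le a k _ (hget i)
  · -- monotone
    intro i j hij
    show (bigL a k).getD i.val 1 ≤ (bigL a k).getD j.val 1
    rcases eq_or_lt_of_le hij with rfl | hlt
    · exact le_refl _
    · have hp := (List.pairwise_iff_get).mp (bigL_sorted a k hk)
      have hi : i.val < (bigL a k).length := by omega
      have hj : j.val < (bigL a k).length := by omega
      rw [List.getD_eq_getElem _ 1 hi, List.getD_eq_getElem _ 1 hj]
      exact hp ⟨i.val, hi⟩ ⟨j.val, hj⟩ hlt
  · -- the equation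
    obtain ⟨j0, hj0⟩ : ∃ j0, k = j0 + 1 := ⟨k - 1, by omega⟩
    have hmap : ((bigL a k).map (fun v => (C v * X + 1 : ℕ[X]))).prod
        = phiL a (LL a k) * (C (zl a k) * X + 1) := by
      unfold bigL
      rw [List.map_append, List.map_append, List.prod_append, List.prod_append,
        List.map_replicate, List.prod_replicate, List.map_singleton, List.prod_singleton]
      rw [show (C (1:ℕ) * X + 1 : ℕ[X]) = X + 1 by rw [map_one, one_mul]]
      rw [phiL, mul_assoc]
    have hΦ : ∏ i : Fin n, (C (xex n k i) * X + 1 : ℕ[X])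
        = phiL a (LL a k) * (C (zl a k) * X + 1) := by
      rw [← hmap]
      exact prod_fin_list (bigL a k) n hlen (fun v => C v * X + 1)
    have hprod : ∏ i : Fin n, xex n k i = (LL a k).prod * zl a k := by
      have := prod_fin_list (bigL a k) n hlen (id : ℕ → ℕ)
      simp only [List.map_id, id] at this
      rw [show ∏ i : Fin n, xex n k i = ∏ i : Fin n, (bigL a k).getD i.val 1 from rfl, this]
      unfold bigL
      rw [List.prod_append, List.prod_append, List.prod_replicate, List.prod_singleton,
        one_pow, one_mul]
    show esymm n k (xex n k) = esymm n n (xex n k)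
    rw [esymm_eq_coeff, esymm_self, hΦ, hprod, hj0, coeff_mul_linear]
    have hc : (LL a (j0 + 1)).prod = 1 + (phiL a (LL a (j0 + 1))).coeff j0 := prod_LL a j0
    have hzl : (phiL a (LL a (j0 + 1))).coeff (j0 + 1) = zl a (j0 + 1) := rfl
    rw [hzl, hc]
    ring

section OrderLemmas
variable {n k : ℕ}

lemma strictMono_fin_aux (f : Fin k → Fin n) (hf : StrictMono f) :
    ∀ (d : ℕ) (l : Fin k), l.val + d < k → (f l).val + d < n := by
  intro d
  induction d with
  | zero => intro l _; simpa using (f l).isLt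
  | succ d ih =>
      intro l hl
      have hl' : l.val + 1 < k := by omega
      set l' : Fin k := ⟨l.val + 1, by omega⟩ with hl'def
      have hlt : f l < f l' := hf (by simp [Fin.lt_def, hl'def])
      have := ih l' (by simp [hl'def]; omega)
      have hv : (f l).val < (f l').val := hlt
      omega

lemma prod_subset_le_top (x : Fin n → ℕ) (hx1 : ∀ i, 1 ≤ x i) (hmono : Monotone x)
    (hkn : k ≤ n) (T : Finset (Fin n)) (hT : T.card = k) :
    ∏ i ∈ T, x i ≤ ∏ i ∈ univ.filter (fun i : Fin n => n - k ≤ i.val), x i := by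
  classical
  set A := T.orderIsoOfFin hT
  have hf : StrictMono (fun l : Fin k => (A l : Fin n)) := by
    intro a b hab
    exact Subtype.coe_lt_coe.mpr (A.strictMono hab)
  have h1 : ∏ i ∈ T, x i = ∏ l : Fin k, x (A l : Fin n) := by
    rw [← Finset.prod_coe_sort T x]
    exact (Equiv.prod_comp A.toEquiv (fun t : T => x (t : Fin n))).symm
  have h2 : ∀ l : Fin k, ((A l : Fin n)).val ≤ n - k + l.val := by
    intro l
    have := strictMono_fin_aux _ hf (k - 1 - l.val) l (by omega)
    omega
  have h3 : ∏ l : Fin k, x (A l : Fin n) ≤ ∏ l : Fin k, x ⟨n - k + l.val, by have := l.isLt; omega⟩ := by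
    apply Finset.prod_le_prod (fun _ _ => Nat.zero_le _)
    intro l _
    exact hmono (by rw [Fin.le_def]; exact h2 l)
  have h4 : ∏ l : Fin k, x ⟨n - k + l.val, by have := l.isLt; omega⟩
      = ∏ i ∈ univ.filter (fun i : Fin n => n - k ≤ i.val), x i := by
    apply Finset.prod_bij (fun l _ => (⟨n - k + l.val, by have := l.isLt; omega⟩ : Fin n))
    · intro l _
      simp only [mem_filter, mem_univ, true_and]
      omega
    · intro l1 _ l2 _ h
      have : n - k + l1.val = n - k + l2.val := congrArg Fin.val h
      ext; omega
    · intro i hi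
      simp only [mem_filter, mem_univ, true_and] at hi
      refine ⟨⟨i.val - (n - k), by have := i.isLt; omega⟩, mem_univ _, ?_⟩
      ext; simp; omega
    · intro l _; rfl
  calc ∏ i ∈ T, x i = ∏ l : Fin k, x (A l : Fin n) := h1
    _ ≤ _ := h3
    _ = _ := h4

end OrderLemmas

def pre (n t : ℕ) : Finset (Fin n) := univ.filter (fun i => i.val < t)

lemma card_pre (n t : ℕ) (h : t ≤ n) : (pre n t).card = t := by
  unfold pre
  rw [Finset.card_filter, Fin.sum_univ_eq_sum_range (fun i => if i < t then 1 else 0) n,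
    ← Finset.sum_filter]
  have : (Finset.range n).filter (fun i => i < t) = Finset.range t := by
    ext i; simp only [Finset.mem_filter, Finset.mem_range]; omega
  rw [this, Finset.sum_const, smul_eq_mul, mul_one, Finset.card_range]

lemma count_mem_powersetCard {n : ℕ} (A : Finset (Fin n)) (m : ℕ) (hm : 1 ≤ m) {i : Fin n}
    (hi : i ∈ A) :
    ((Finset.powersetCard m A).filter (fun S => i ∈ S)).card = (A.card - 1).choose (m - 1) := by
  classical
  have hnot : (Finset.powersetCard m A).filter (fun S => ¬ i ∈ S)
      = Finset.powersetCard m (A.erase i) := by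
    ext S
    simp only [Finset.mem_filter, Finset.mem_powersetCard]
    constructor
    · rintro ⟨⟨hs, hc⟩, hns⟩
      exact ⟨Finset.subset_erase.mpr ⟨hs, hns⟩, hc⟩
    · rintro ⟨hs, hc⟩
      have := Finset.subset_erase.mp hs
      exact ⟨⟨this.1, hc⟩, this.2⟩
  have htot := Finset.card_filter_add_card_filter_not
    (s := Finset.powersetCard m A) (p := fun S => i ∈ S)
  rw [hnot] at htot
  rw [Finset.card_powersetCard, Finset.card_powersetCard, Finset.card_erase_of_mem hi] at htot
  have hA1 : 0 < A.card := Finset.card_pos.mpr ⟨i, hi⟩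
  have hpas : A.card.choose m = (A.card - 1).choose (m - 1) + (A.card - 1).choose m := by
    have hp := Nat.choose_succ_succ' (A.card - 1) (m - 1)
    rw [show A.card - 1 + 1 = A.card by omega, show m - 1 + 1 = m by omega] at hp
    exact hp
  omega

lemma prod_powersetCard_eq_pow {n : ℕ} (A : Finset (Fin n)) (m : ℕ) (hm : 1 ≤ m) (x : Fin n → ℕ) :
    ∏ S ∈ Finset.powersetCard m A, ∏ i ∈ S, x i
      = (∏ i ∈ A, x i) ^ ((A.card - 1).choose (m - 1)) := by
  classical
  have h1 : ∀ S ∈ Finset.powersetCard m A, ∏ i ∈ S, x i = ∏ i ∈ A, if i ∈ S then x i else 1 := by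
    intro S hS
    rw [Finset.prod_ite_mem, Finset.inter_eq_right.mpr (Finset.mem_powersetCard.mp hS).1]
  rw [Finset.prod_congr rfl h1, Finset.prod_comm]
  have h2 : ∀ i ∈ A, (∏ S ∈ Finset.powersetCard m A, if i ∈ S then x i else 1)
      = x i ^ ((A.card - 1).choose (m - 1)) := by
    intro i hi
    rw [Finset.prod_ite, Finset.prod_const, Finset.prod_const_one, mul_one,
      count_mem_powersetCard A m hm hi]
  rw [Finset.prod_congr rfl h2, Finset.prod_pow]

lemma esymm_self' (n : ℕ) (x : Fin n → ℕ) : esymm n n x = ∏ i, x i := esymm_self n x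

section Counting
variable {n k : ℕ} (hk : 1 ≤ k) (hkn : k < n) (x : Fin n → ℕ)
  (hx1 : ∀ i, 1 ≤ x i) (hmono : Monotone x) (heq : esymm n k x = esymm n n x)

include hk hkn hx1 hmono heq

lemma base_bound : ∏ i ∈ pre n (n - k), x i ≤ n.choose k := by
  classical
  set Top := univ.filter (fun i : Fin n => n - k ≤ i.val) with hTopdef
  have hTopcard : Top.card = k := by
    have h1 : Topᶜ = pre n (n - k) := by
      ext i
      simp [hTopdef, pre]
      omega
    have h2 := Finset.card_compl Top
    rw [h1, card_pre n (n-k) (by omega)] at h2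
    simp only [Fintype.card_fin] at h2
    omega
  have hsum : ∑ T ∈ Finset.univ.powersetCard k, ∏ i ∈ T, x i = ∏ i, x i := by
    rw [← esymm_self' n x, ← heq]; rfl
  have hle : ∑ T ∈ Finset.univ.powersetCard k, ∏ i ∈ T, x i
      ≤ n.choose k * ∏ i ∈ Top, x i := by
    have := Finset.sum_le_card_nsmul (Finset.univ.powersetCard k)
      (fun T => ∏ i ∈ T, x i) (∏ i ∈ Top, x i) ?_
    · rw [Finset.card_powersetCard, Finset.card_univ, Fintype.card_fin, smul_eq_mul] at this
      exact this
    · intro T hT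
      have hTc := (Finset.mem_powersetCard.mp hT).2
      exact prod_subset_le_top x hx1 hmono (le_of_lt hkn) T hTc
  have hcompl : Topᶜ = pre n (n - k) := by
    ext i; simp [hTopdef, pre]; omega
  have hprod : (∏ i ∈ Top, x i) * ∏ i ∈ pre n (n - k), x i = ∏ i, x i := by
    rw [← hcompl]; exact Finset.prod_mul_prod_compl Top x
  have hTpos : 0 < ∏ i ∈ Top, x i := Finset.prod_pos (fun i _ => hx1 i)
  have : (∏ i ∈ Top, x i) * ∏ i ∈ pre n (n - k), x i ≤ (∏ i ∈ Top, x i) * n.choose k := by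
    rw [hprod, ← hsum]
    calc ∑ T ∈ Finset.univ.powersetCard k, ∏ i ∈ T, x i
        ≤ n.choose k * ∏ i ∈ Top, x i := hle
      _ = (∏ i ∈ Top, x i) * n.choose k := by ring
  exact Nat.le_of_mul_le_mul_left this hTpos

lemma key_bound (t : ℕ) (hmt : n - k ≤ t) (htn : t < n) :
    x ⟨t, htn⟩ ≤ n.choose k * (∏ i ∈ pre n t, x i) ^ ((t - 1).choose (n - k - 1)) := by
  classical
  set N := ∏ i, x i with hNdef
  have hN1 : 1 ≤ N := Nat.one_le_iff_ne_zero.mpr (Nat.pos_iff_ne_zero.mp (Finset.prod_pos (fun i _ => hx1 i)))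
  set 𝒯 := (Finset.univ.powersetCard k).filter (fun T : Finset (Fin n) => Tᶜ ⊆ pre n t) with hTdef
  set ℛ := (Finset.univ.powersetCard k).filter (fun T : Finset (Fin n) => ¬ Tᶜ ⊆ pre n t) with hRdef
  have hsplit : (∑ T ∈ 𝒯, ∏ i ∈ T, x i) + (∑ T ∈ ℛ, ∏ i ∈ T, x i) = N := by
    rw [hTdef, hRdef, Finset.sum_filter_add_sum_filter_not]
    rw [hNdef, ← esymm_self' n x, ← heq]; rfl
  set r := ∑ T ∈ ℛ, ∏ i ∈ T, x i with hrdef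
  have hT0 : pre n k ∈ ℛ := by
    rw [hRdef, Finset.mem_filter]
    constructor
    · rw [Finset.mem_powersetCard]; exact ⟨Finset.subset_univ _, card_pre n k (by omega)⟩
    · intro hsub
      have hlast : (⟨n-1, by omega⟩ : Fin n) ∈ (pre n k)ᶜ := by
        simp [pre]; omega
      have := hsub hlast
      simp [pre] at this; omega
  have hr1 : 1 ≤ r := by
    have h1 : (1:ℕ) ≤ ∏ i ∈ pre n k, x i := Finset.one_le_prod' (fun i _ => hx1 i)
    have h2 : ∏ i ∈ pre n k, x i ≤ r :=
      Finset.single_le_sum (f := fun T => ∏ i ∈ T, x i) (fun T _ => Nat.zero_le _) hT0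
    omega
  have hterm : ∀ T ∈ ℛ, x ⟨t, htn⟩ * ∏ i ∈ T, x i ≤ N := by
    intro T hT
    rw [hRdef, Finset.mem_filter] at hT
    obtain ⟨hTP, hTns⟩ := hT
    obtain ⟨i0, hi0c, hi0n⟩ := Finset.not_subset.mp hTns
    have hti0 : x ⟨t, htn⟩ ≤ x i0 := by
      apply hmono
      rw [Fin.le_def]
      simp only [pre, Finset.mem_filter, Finset.mem_univ, true_and, not_lt] at hi0n
      exact hi0n
    have h2 : x ⟨t, htn⟩ ≤ ∏ i ∈ Tᶜ, x i :=
      le_trans hti0 (Finset.single_le_prod' (fun i _ => hx1 i) hi0c)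
    calc x ⟨t,htn⟩ * ∏ i ∈ T, x i ≤ (∏ i ∈ Tᶜ, x i) * ∏ i ∈ T, x i :=
          Nat.mul_le_mul_right _ h2
      _ = N := by rw [mul_comm]; exact Finset.prod_mul_prod_compl T x
  have hxr : x ⟨t, htn⟩ * r ≤ n.choose k * N := by
    rw [hrdef, Finset.mul_sum]
    calc ∑ T ∈ ℛ, x ⟨t,htn⟩ * ∏ i ∈ T, x i ≤ ∑ _T ∈ ℛ, N := Finset.sum_le_sum hterm
      _ = ℛ.card * N := by rw [Finset.sum_const, smul_eq_mul]
      _ ≤ n.choose k * N := by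
          apply Nat.mul_le_mul_right
          calc ℛ.card ≤ (Finset.univ.powersetCard k (α := Fin n)).card :=
                Finset.card_filter_le _ _
            _ = n.choose k := by rw [Finset.card_powersetCard]; simp
  set Q := ∏ T ∈ 𝒯, ∏ i ∈ Tᶜ, x i with hQdef
  have hQ1 : 1 ≤ Q := Finset.one_le_prod' (fun T _ => Finset.one_le_prod' (fun i _ => hx1 i))
  set K := ∑ T ∈ 𝒯, ∏ T' ∈ 𝒯.erase T, ∏ i ∈ T'ᶜ, x i with hKdef
  have hNQ : N * Q = N * K + r * Q := by
    have hterm2 : ∀ T ∈ 𝒯, (∏ i ∈ T, x i) * Q = N * ∏ T' ∈ 𝒯.erase T, ∏ i ∈ T'ᶜ, x i := by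
      intro T hT
      rw [hQdef, ← Finset.mul_prod_erase 𝒯 (fun T' => ∏ i ∈ T'ᶜ, x i) hT, ← mul_assoc,
        Finset.prod_mul_prod_compl T x, hNdef]
    calc N * Q = ((∑ T ∈ 𝒯, ∏ i ∈ T, x i) + r) * Q := by rw [hsplit]
      _ = (∑ T ∈ 𝒯, (∏ i ∈ T, x i) * Q) + r * Q := by rw [add_mul, Finset.sum_mul]
      _ = (∑ T ∈ 𝒯, N * ∏ T' ∈ 𝒯.erase T, ∏ i ∈ T'ᶜ, x i) + r * Q :=
          by rw [Finset.sum_congr rfl hterm2]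
      _ = N * K + r * Q := by rw [hKdef, Finset.mul_sum]
  have hrQ : 1 ≤ r * Q := le_trans (by omega) (Nat.mul_le_mul hr1 hQ1)
  have hKQ : K < Q := by
    have h1 : N * K < N * Q := by omega
    exact lt_of_mul_lt_mul_left h1 (Nat.zero_le N)
  have hNrQ : N ≤ r * Q := by
    have h2 : N * (K + 1) ≤ N * Q := Nat.mul_le_mul_left _ hKQ
    rw [Nat.mul_add, mul_one] at h2
    omega
  have hfinal : x ⟨t,htn⟩ * N ≤ (n.choose k * Q) * N := by
    calc x ⟨t,htn⟩ * N ≤ x ⟨t,htn⟩ * (r * Q) := Nat.mul_le_mul_left _ hNrQ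
      _ = (x ⟨t,htn⟩ * r) * Q := by ring
      _ ≤ (n.choose k * N) * Q := Nat.mul_le_mul_right _ hxr
      _ = (n.choose k * Q) * N := by ring
  have hxt : x ⟨t,htn⟩ ≤ n.choose k * Q := Nat.le_of_mul_le_mul_right hfinal (by omega)
  have hQeq : Q = (∏ i ∈ pre n t, x i) ^ ((t-1).choose (n - k - 1)) := by
    have hbij : Q = ∏ S ∈ Finset.powersetCard (n-k) (pre n t), ∏ i ∈ S, x i := by
      rw [hQdef]
      apply Finset.prod_bij (fun T (_ : T ∈ 𝒯) => Tᶜ)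
      · intro T hT
        rw [hTdef, Finset.mem_filter] at hT
        rw [Finset.mem_powersetCard]
        refine ⟨hT.2, ?_⟩
        rw [Finset.card_compl, (Finset.mem_powersetCard.mp hT.1).2]
        simp
      · intro T1 _ T2 _ h
        exact compl_injective h
      · intro S hS
        rw [Finset.mem_powersetCard] at hS
        refine ⟨Sᶜ, ?_, by simp⟩
        rw [hTdef, Finset.mem_filter]
        refine ⟨Finset.mem_powersetCard.mpr ⟨Finset.subset_univ _, ?_⟩, by simp [hS.1]⟩
        rw [Finset.card_compl, hS.2]
        simp only [Fintype.card_fin]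
        omega
      · intro T _; rfl
    rw [hbij, prod_powersetCard_eq_pow (pre n t) (n-k) (by omega) x, card_pre n t (by omega)]
  rw [← hQeq]; exact hxt


end Counting

lemma hockey (c : ℕ) : ∀ u, ∑ i ∈ Finset.range u, (c + i).choose c = (c + u).choose (c + 1) := by
  intro u
  induction u with
  | zero => simp
  | succ u ih =>
      rw [Finset.sum_range_succ, ih, show c + (u+1) = (c + u) + 1 by omega,
        Nat.choose_succ_succ' (c + u) c]
      omega

lemma succ_le_two_pow (μ : ℕ) : μ + 1 ≤ 2 ^ μ := by
  induction μ with
  | zero => simp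
  | succ μ ih =>
      have : 2 ^ (μ + 1) = 2 ^ μ + 2 ^ μ := by ring
      have h2 : 1 ≤ 2 ^ μ := Nat.one_le_two_pow
      omega

lemma le_two_pow_pred (n : ℕ) (hn : 1 ≤ n) : n ≤ 2 ^ (n - 1) := by
  induction n with
  | zero => omega
  | succ n ih =>
      rcases Nat.eq_or_lt_of_le hn with h | h
      · simp [← h]
      · have h1 := ih (by omega)
        have h2 : 2 ^ (n + 1 - 1) = 2 ^ (n - 1) + 2 ^ (n - 1) := by
          rw [show n + 1 - 1 = (n - 1) + 1 by omega]; ring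
        have h3 : 1 ≤ 2 ^ (n - 1) := Nat.one_le_two_pow
        omega

lemma le_choose (l j : ℕ) (h1 : 1 ≤ j) (h2 : j < l) : l ≤ l.choose j := by
  induction l generalizing j with
  | zero => omega
  | succ l ih =>
      rcases Nat.eq_or_lt_of_le (show j ≤ l by omega) with h | h
      · subst h
        rw [Nat.choose_succ_self_right]
      · have hp : (l+1).choose j = l.choose (j-1) + l.choose j := by
          have := Nat.choose_succ_succ' l (j-1)
          rw [show j - 1 + 1 = j by omega] at this
          exact this
        have hpos : 1 ≤ l.choose (j-1) := Nat.choose_pos (by omega)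
        have := ih j h1 h
        omega

lemma choose_le_two_pow (n j : ℕ) : n.choose j ≤ 2 ^ n := by
  by_cases h : j ≤ n
  · calc n.choose j ≤ ∑ i ∈ Finset.range (n+1), n.choose i :=
        Finset.single_le_sum (fun i _ => Nat.zero_le _) (Finset.mem_range.mpr (by omega))
      _ = 2 ^ n := Nat.sum_range_choose n
  · rw [Nat.choose_eq_zero_of_lt (by omega)]; exact Nat.zero_le _


def μf (n k t : ℕ) : ℕ := (t - 1).choose (n - k - 1)
def Wf (n k t : ℕ) : ℕ := ∏ j ∈ Finset.Ico (n - k) t, (1 + μf n k j)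
def gf (n k t : ℕ) : ℕ := 2 * Wf n k t - 1

lemma Wf_one_le (n k t : ℕ) : 1 ≤ Wf n k t := Finset.one_le_prod' (fun j _ => by omega)

lemma μf_one_le (n k t : ℕ) (h : n - k ≤ t) (h2 : 1 ≤ n - k) : 1 ≤ μf n k t :=
  Nat.choose_pos (by omega)

lemma Wf_succ (n k t : ℕ) (h : n - k ≤ t) : Wf n k (t+1) = Wf n k t * (1 + μf n k t) :=
  Finset.prod_Ico_succ_top h _

lemma gf_exp_step (n k t : ℕ) (h : n - k ≤ t) (h2 : 1 ≤ n - k) :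
    gf n k t + (1 + μf n k t * gf n k t) ≤ gf n k (t + 1) := by
  have hW1 := Wf_one_le n k t
  have hmu := μf_one_le n k t h h2
  have hWs := Wf_succ n k t h
  set a := Wf n k t with ha
  set b := μf n k t with hb
  have e1 : gf n k t = 2 * a - 1 := rfl
  have e2 : gf n k (t+1) = 2 * (a * (1 + b)) - 1 := by
    unfold gf; rw [hWs]
  obtain ⟨c, hc⟩ : ∃ c, a = c + 1 := ⟨a - 1, by omega⟩
  rw [e1, e2, hc]
  rw [show 2 * (c + 1) - 1 = 2 * c + 1 by omega]
  have h3 : b * (2 * c + 1) = 2 * (b * c) + b := by ring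
  have h4 : 2 * ((c + 1) * (1 + b)) - 1 = 2 * c + 2 * (b * c) + 2 * b + 1 := by
    have : 2 * ((c + 1) * (1 + b)) = 2 * c + 2 * (b * c) + 2 * b + 2 := by ring
    omega
  rw [h3, h4]
  have hq : 0 ≤ b * c := Nat.zero_le _
  linarith

lemma prod_pre_succ (n t : ℕ) (htn : t < n) (x : Fin n → ℕ) :
    ∏ i ∈ pre n (t + 1), x i = (∏ i ∈ pre n t, x i) * x ⟨t, htn⟩ := by
  have hins : pre n (t+1) = insert ⟨t, htn⟩ (pre n t) := by
    ext i
    simp only [pre, Finset.mem_insert, Finset.mem_filter, Finset.mem_univ, true_and,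
      Fin.ext_iff]
    omega
  rw [hins, Finset.prod_insert (by simp [pre])]
  ring

lemma PI_bound (n k : ℕ) (hk : 1 ≤ k) (hkn : k < n) (x : Fin n → ℕ) (hx : x ∈ sols n k) :
    ∀ t, n - k ≤ t → t ≤ n → ∏ i ∈ pre n t, x i ≤ (n.choose k) ^ gf n k t := by
  obtain ⟨hx0, hmono, heq⟩ := hx
  have hx1 : ∀ i, 1 ≤ x i := hx0
  have hC1 : 1 ≤ n.choose k := Nat.choose_pos (by omega)
  intro t
  induction t with
  | zero => intro h1 h2; omega
  | succ t ih =>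
      intro h1 h2
      rcases Nat.eq_or_lt_of_le h1 with hbase | hlt
      · -- t + 1 = n - k : base case
        have hg : gf n k (t+1) = 1 := by
          unfold gf Wf
          rw [hbase, Finset.Ico_self, Finset.prod_empty]
          omega
        rw [hg, pow_one, ← hbase]
        exact base_bound hk hkn x hx1 hmono heq
      · -- step
        have hmt : n - k ≤ t := by omega
        have htn : t < n := by omega
        have hPI := ih hmt (by omega)
        have hkey := key_bound hk hkn x hx1 hmono heq t hmt htn
        have hxt : x ⟨t, htn⟩ ≤ (n.choose k) ^ (1 + μf n k t * gf n k t) := by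
          calc x ⟨t, htn⟩ ≤ n.choose k * (∏ i ∈ pre n t, x i) ^ ((t-1).choose (n-k-1)) := hkey
            _ ≤ n.choose k * ((n.choose k) ^ gf n k t) ^ μf n k t := by
                apply Nat.mul_le_mul_left
                exact Nat.pow_le_pow_left hPI _
            _ = (n.choose k) ^ (1 + μf n k t * gf n k t) := by
                rw [← pow_mul, pow_add, pow_one, mul_comm (gf n k t) (μf n k t)]
        calc ∏ i ∈ pre n (t+1), x i = (∏ i ∈ pre n t, x i) * x ⟨t, htn⟩ :=
              prod_pre_succ n t htn x
          _ ≤ (n.choose k) ^ gf n k t * (n.choose k) ^ (1 + μf n k t * gf n k t) :=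
              Nat.mul_le_mul hPI hxt
          _ = (n.choose k) ^ (gf n k t + (1 + μf n k t * gf n k t)) := by rw [← pow_add]
          _ ≤ (n.choose k) ^ gf n k (t+1) :=
              Nat.pow_le_pow_right hC1 (gf_exp_step n k t hmt (by omega))

def Df (n k : ℕ) (i : Fin n) : ℕ :=
  if i.val < n - k then n.choose k else (n.choose k) ^ (1 + μf n k i.val * gf n k i.val)

lemma coord_bound (n k : ℕ) (hk : 1 ≤ k) (hkn : k < n) (x : Fin n → ℕ) (hx : x ∈ sols n k) :
    ∀ i, x i ≤ Df n k i := by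
  obtain ⟨hx0, hmono, heq⟩ := hx
  have hx1 : ∀ i, 1 ≤ x i := hx0
  intro i
  unfold Df
  split_ifs with h
  · have hmem : i ∈ pre n (n-k) := by
      unfold pre
      rw [Finset.mem_filter]
      exact ⟨Finset.mem_univ i, h⟩
    have h1 : x i ≤ ∏ j ∈ pre n (n-k), x j :=
      Finset.single_le_prod' (fun j _ => hx1 j) hmem
    exact le_trans h1 (base_bound hk hkn x hx1 hmono heq)
  · have hkey := key_bound hk hkn x hx1 hmono heq i.val (by omega) i.isLt
    have hPI := PI_bound n k hk hkn x ⟨hx0, hmono, heq⟩ i.val (by omega) (le_of_lt i.isLt)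
    calc x i = x ⟨i.val, i.isLt⟩ := by rw [Fin.eta]
      _ ≤ n.choose k * (∏ j ∈ pre n i.val, x j) ^ ((i.val - 1).choose (n-k-1)) := hkey
      _ ≤ n.choose k * ((n.choose k) ^ gf n k i.val) ^ μf n k i.val := by
          apply Nat.mul_le_mul_left
          exact Nat.pow_le_pow_left hPI _
      _ = (n.choose k) ^ (1 + μf n k i.val * gf n k i.val) := by
          rw [← pow_mul, pow_add, pow_one, mul_comm (gf n k i.val) (μf n k i.val)]

lemma tel_sum (n k : ℕ) : ∀ u, n - k ≤ u →
    (∑ t ∈ Finset.Ico (n-k) u, μf n k t * Wf n k t) + 1 = Wf n k u := by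
  intro u
  induction u with
  | zero =>
      intro h
      have : n - k = 0 := by omega
      rw [this] at *
      simp [Wf, this]
  | succ u ih =>
      intro h
      rcases Nat.eq_or_lt_of_le h with hbase | hlt
      · rw [← hbase]
        simp [Wf, ← hbase]
      · have hmu : n - k ≤ u := by omega
        rw [Finset.sum_Ico_succ_top hmu, Wf_succ n k u hmu]
        have := ih hmu
        have hexp : Wf n k u * (1 + μf n k u) = Wf n k u + μf n k u * Wf n k u := by ring
        omega

lemma main_exp_ineq (n k : ℕ) (hk : 1 ≤ k) (hkn : k < n) :
    (∑ i : Fin n, (if i.val < n - k then 1 else 1 + μf n k i.val * gf n k i.val)) + 1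
      ≤ 2 ^ (n.choose k) := by
  set m := n - k with hm
  have hm1 : 1 ≤ m := by omega
  set e : ℕ → ℕ := fun t => if t < m then 1 else 1 + μf n k t * gf n k t with he
  have hsum1 : ∑ i : Fin n, (if i.val < m then 1 else 1 + μf n k i.val * gf n k i.val)
      = ∑ t ∈ Finset.range n, e t := Fin.sum_univ_eq_sum_range e n
  set A := ∑ t ∈ Finset.Ico m n, μf n k t with hA
  set V := Wf n k n with hV
  -- split the sum
  have hsplit : ∑ t ∈ Finset.range n, e t
      = (∑ t ∈ Finset.Ico 0 m, e t) + ∑ t ∈ Finset.Ico m n, e t := by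
    rw [Finset.range_eq_Ico, ← Finset.sum_Ico_consecutive _ (Nat.zero_le m) (by omega)]
  have h3 : ∑ t ∈ Finset.Ico 0 m, e t = m := by
    rw [Finset.sum_congr rfl (fun t ht => ?_), Finset.sum_const, Nat.card_Ico, smul_eq_mul,
      mul_one]
    · omega
    · rw [he]
      simp only [Finset.mem_Ico] at ht
      exact if_pos ht.2
  have h4 : (∑ t ∈ Finset.Ico m n, e t) + A
      = k + 2 * ∑ t ∈ Finset.Ico m n, (μf n k t * Wf n k t) := by
    rw [hA, ← Finset.sum_add_distrib]
    have hpt : ∀ t ∈ Finset.Ico m n, e t + μf n k t = 1 + 2 * (μf n k t * Wf n k t) := by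
      intro t ht
      simp only [Finset.mem_Ico] at ht
      have hgw : gf n k t + 1 = 2 * Wf n k t := by
        have := Wf_one_le n k t
        unfold gf
        omega
      have : e t = 1 + μf n k t * gf n k t := by
        rw [he]; exact if_neg (by omega)
      rw [this]
      calc 1 + μf n k t * gf n k t + μf n k t = 1 + μf n k t * (gf n k t + 1) := by ring
        _ = 1 + μf n k t * (2 * Wf n k t) := by rw [hgw]
        _ = 1 + 2 * (μf n k t * Wf n k t) := by ring
    rw [Finset.sum_congr rfl hpt, Finset.sum_add_distrib, Finset.sum_const, Nat.card_Ico,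
      smul_eq_mul, mul_one, ← Finset.mul_sum]
    omega
  have h5 := tel_sum n k n (by omega)
  rw [← hm] at h5
  -- A = (n-1).choose m
  have hAeq : A = (n-1).choose m := by
    rw [hA, Finset.sum_Ico_eq_sum_range]
    have hcg : ∀ i ∈ Finset.range (n - m), μf n k (m + i) = ((m-1) + i).choose (m-1) := by
      intro i _
      unfold μf
      congr 1
      omega
    rw [Finset.sum_congr rfl hcg, hockey (m-1) (n-m)]
    congr 1 <;> omega
  -- V ≤ 2^A
  have hVle : V ≤ 2 ^ A := by
    rw [hV, hA]
    unfold Wf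
    calc ∏ j ∈ Finset.Ico m n, (1 + μf n k j) ≤ ∏ j ∈ Finset.Ico m n, 2 ^ (μf n k j) := by
          apply Finset.prod_le_prod (fun _ _ => Nat.zero_le _)
          intro j _
          have := succ_le_two_pow (μf n k j)
          omega
      _ = 2 ^ ∑ j ∈ Finset.Ico m n, μf n k j := Finset.prod_pow_eq_pow_sum _ _ _
  set B := (n-1).choose (m-1) with hB
  have hCAB : n.choose k = B + A := by
    have hsymm : n.choose m = n.choose k := by
      rw [hm]; exact Nat.choose_symm (le_of_lt hkn)
    have hpas := Nat.choose_succ_succ' (n-1) (m-1)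
    rw [show n - 1 + 1 = n by omega, show m - 1 + 1 = m by omega] at hpas
    rw [← hsymm, hpas, hAeq, hB]
  have hB1 : 1 ≤ B := Nat.choose_pos (by omega)
  have hA1 : 1 ≤ A := by
    rw [hAeq]; exact Nat.choose_pos (by omega)
  -- final numeric assembly
  rw [hsum1, hsplit, h3]
  -- goal: m + Σ_{Ico} e + 1 ≤ 2^C;  use h4, h5
  have hgoal : m + (∑ t ∈ Finset.Ico m n, e t) + A + 2 = n + 2 * V := by
    have h2V : 2 * V = 2 * (∑ t ∈ Finset.Ico m n, (μf n k t * Wf n k t)) + 2 := by omega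
    omega
  -- need: n + 2V ≤ 2^(B+A) + A + 1
  have hfin : n + 2 * V ≤ 2 ^ (B + A) + A + 1 := by
    rcases Nat.eq_or_lt_of_le hm1 with hm1' | hm2
    · -- m = 1 : B = 1, A = n-1
      have hBeq : B = 1 := by rw [hB, ← hm1']; simp
      have hAeq2 : A = n - 1 := by
        rw [hAeq, ← hm1', Nat.choose_one_right]
      have h2A : 2 * V ≤ 2 ^ (A + 1) := by
        have : 2 ^ (A+1) = 2 * 2 ^ A := by ring
        omega
      rw [hBeq, hAeq2]
      rw [show 1 + (n-1) = n by omega]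
      have : 2 ^ (A + 1) = 2 ^ n := by rw [hAeq2]; congr 1; omega
      omega
    · -- m ≥ 2
      have hn3 : 3 ≤ n := by omega
      have hBn : n - 1 ≤ B := by
        rw [hB]
        exact le_choose (n-1) (m-1) (by omega) (by omega)
      have hCn : n ≤ B + A := by
        rw [← hCAB]
        exact le_choose n k hk hkn
      have e1 : 2 ^ (B + A) = 2 ^ (B + A - 1) * 2 := by
        rw [← pow_succ]
        congr 1
        omega
      have e2 : 2 ^ (A + 1) ≤ 2 ^ (B + A - 1) := Nat.pow_le_pow_right (by omega) (by omega)
      have e3 : 2 ^ (n - 1) ≤ 2 ^ (B + A - 1) := Nat.pow_le_pow_right (by omega) (by omega)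
      have e4 : n ≤ 2 ^ (n - 1) := le_two_pow_pred n (by omega)
      have e5 : 2 * V ≤ 2 ^ (A + 1) := by
        have : 2 ^ (A + 1) = 2 * 2 ^ A := by ring
        omega
      omega
  rw [hCAB]
  omega

lemma sols_finite_card (n k : ℕ) (hk : 1 ≤ k) (hkn : k < n) :
    (sols n k).Finite ∧ (sols n k).ncard ≤ ∏ i, Df n k i := by
  classical
  set T : Set (Fin n → ℕ) := Set.pi Set.univ (fun i => Set.Icc 1 (Df n k i)) with hT
  have hTfin : T.Finite := Set.Finite.pi (fun i => Set.finite_Icc _ _)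
  have hsub : sols n k ⊆ T := by
    intro x hx i _
    exact ⟨hx.1 i, coord_bound n k hk hkn x hx i⟩
  have hfin : (sols n k).Finite := hTfin.subset hsub
  refine ⟨hfin, ?_⟩
  have hf : Function.Injective (fun (x : sols n k) (i : Fin n) =>
      (⟨x.1 i - 1, by
        have h1 := x.2.1 i
        have h2 := coord_bound n k hk hkn x.1 x.2 i
        omega⟩ : Fin (Df n k i))) := by
    intro x y hxy
    apply Subtype.ext
    funext i
    have := congrFun hxy i
    have hval : x.1 i - 1 = y.1 i - 1 := congrArg Fin.val this
    have h1 := x.2.1 i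
    have h2 := y.2.1 i
    omega
  have hle := Nat.card_le_card_of_injective _ hf
  rw [Nat.card_coe_set_eq] at hle
  calc (sols n k).ncard ≤ Nat.card (∀ i : Fin n, Fin (Df n k i)) := hle
    _ = ∏ i, Df n k i := by
        rw [Nat.card_pi]
        exact Finset.prod_congr rfl (fun i _ => Nat.card_eq_fintype_card.trans (Fintype.card_fin _))

lemma Df_prod_lt (n k : ℕ) (hk : 1 ≤ k) (hkn : k < n) :
    ∏ i, Df n k i < 2 ^ (n * 2 ^ n.choose k) := by
  have hC1 : 1 ≤ n.choose k := Nat.choose_pos (by omega)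
  have hCle : n.choose k ≤ 2 ^ n := choose_le_two_pow n k
  set E := ∑ i : Fin n, (if i.val < n - k then 1 else 1 + μf n k i.val * gf n k i.val) with hE
  have h1 : ∏ i, Df n k i = (n.choose k) ^ E := by
    rw [hE, ← Finset.prod_pow_eq_pow_sum]
    apply Finset.prod_congr rfl
    intro i _
    unfold Df
    split_ifs with h
    · rw [pow_one]
    · rfl
  have h2 : (n.choose k) ^ E ≤ (2 ^ n) ^ E := Nat.pow_le_pow_left hCle E
  have h3 : (2 ^ n : ℕ) ^ E = 2 ^ (n * E) := by rw [← pow_mul]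
  have hElt : E < 2 ^ n.choose k := by
    have := main_exp_ineq n k hk hkn
    rw [← hE] at this
    omega
  have h4 : n * E < n * 2 ^ n.choose k := by
    have hn0 : 0 < n := by omega
    exact (Nat.mul_lt_mul_left hn0).mpr hElt
  calc ∏ i, Df n k i = (n.choose k) ^ E := h1
    _ ≤ 2 ^ (n * E) := by rw [← h3]; exact h2
    _ < 2 ^ (n * 2 ^ n.choose k) := Nat.pow_lt_pow_right (by omega) h4

/-- For `1 ≤ k < n`, the equation `σ_k = σ_n` has at least one solution in
nondecreasing positive integers, and the (finite) number of solutions is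
less than `2 ^ (n * 2 ^ C(n,k))`. -/
theorem stmt0 (n k : ℕ) (hk : 1 ≤ k) (hkn : k < n) :
    (sols n k).Finite ∧ 1 ≤ (sols n k).ncard ∧
      (sols n k).ncard < 2 ^ (n * 2 ^ n.choose k) := by
  obtain ⟨hfin, hcard⟩ := sols_finite_card n k hk hkn
  refine ⟨hfin, ?_, lt_of_le_of_lt hcard (Df_prod_lt n k hk hkn)⟩
  have hne : (sols n k).Nonempty := ⟨xex n k, xex_mem n k hk hkn⟩
  have hpos := (Set.ncard_pos hfin).mpr hne
  omega
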